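/- Let V₁, V₂, V₃ be vector spaces over 𝔽, and for each i = 1, 2, 3 let xᵢ, yᵢ ∈ Vᵢ be linearly independent vectors. Then the tensor T := x₁⊗x₂⊗x₃ + y₁⊗x₂⊗x₃ + x₁⊗y₂⊗x₃ + x₁⊗x₂⊗y₃ ∈ V₁⊗V₂⊗V₃ cannot be written as v₁⊗v₂⊗v₃ + w₁⊗w₂⊗w₃ for any vectors vᵢ, wᵢ ∈ Vᵢ; in other words, the tensor rank of T is greater than 2. -/

import Mathlib

open TensorProduct

/-- Existence of dual functionals separating two linearly independent vectors. -/
lemma exists_dual_pair (F : Type*) [Field F] {V : Type*} [AddCommGroup V] [Module F V]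
    {x y : V} (h : LinearIndependent F ![x, y]) :
    ∃ f g : V →ₗ[F] F, f x = 1 ∧ f y = 0 ∧ g x = 0 ∧ g y = 1 := by
  set B := Module.Basis.span h with hB
  obtain ⟨f, hf⟩ := LinearMap.exists_extend (B.coord 0)
  obtain ⟨g, hg⟩ := LinearMap.exists_extend (B.coord 1)
  have hx : x ∈ Submodule.span F (Set.range ![x, y]) :=
    Submodule.subset_span ⟨0, rfl⟩
  have hy : y ∈ Submodule.span F (Set.range ![x, y]) :=
    Submodule.subset_span ⟨1, rfl⟩
  have hBx : (⟨x, hx⟩ : Submodule.span F (Set.range ![x, y])) = B 0 := by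
    apply Subtype.ext
    simp [hB, Module.Basis.span_apply]
  have hBy : (⟨y, hy⟩ : Submodule.span F (Set.range ![x, y])) = B 1 := by
    apply Subtype.ext
    simp [hB, Module.Basis.span_apply]
  have c0x : B.coord 0 ⟨x, hx⟩ = 1 := by rw [hBx]; simp
  have c0y : B.coord 0 ⟨y, hy⟩ = 0 := by rw [hBy]; simp
  have c1x : B.coord 1 ⟨x, hx⟩ = 0 := by rw [hBx]; simp
  have c1y : B.coord 1 ⟨y, hy⟩ = 1 := by rw [hBy]; simp
  exact ⟨f, g, (LinearMap.congr_fun hf ⟨x, hx⟩).trans c0x,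
    (LinearMap.congr_fun hf ⟨y, hy⟩).trans c0y,
    (LinearMap.congr_fun hg ⟨x, hx⟩).trans c1x,
    (LinearMap.congr_fun hg ⟨y, hy⟩).trans c1y⟩

/-- The scalar-level contradiction for the rank-3 tensor. -/
lemma key_scalar {F : Type*} [Field F]
    (a0 a1 b0 b1 c0 c1 d0 d1 e0 e1 f0 f1 : F)
    (h000 : a0*(b0*c0) + d0*(e0*f0) = 1)
    (h100 : a1*(b0*c0) + d1*(e0*f0) = 1)
    (h010 : a0*(b1*c0) + d0*(e1*f0) = 1)
    (h001 : a0*(b0*c1) + d0*(e0*f1) = 1)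
    (h110 : a1*(b1*c0) + d1*(e1*f0) = 0)
    (h101 : a1*(b0*c1) + d1*(e0*f1) = 0)
    (h011 : a0*(b1*c1) + d0*(e1*f1) = 0)
    (h111 : a1*(b1*c1) + d1*(e1*f1) = 0) : False := by
  set m : F := a0*b0*(d1*e1) + d0*e0*(a1*b1) - a1*b0*(d0*e1) - d1*e0*(a0*b1) with hm
  have hm0 : c0*f0*m = -1 := by
    linear_combination (a1*b1*c0 + d1*e1*f0) * h000 + h110
      - (a0*b1*c0 + d0*e1*f0) * h100 - h010
  have hm2 : c1*f1*m = 0 := by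
    linear_combination (a1*b1*c1 + d1*e1*f1) * h001 + h111
      - (a0*b1*c1 + d0*e1*f1) * h101
  have hm1 : (c0*f1 + c1*f0)*m = 0 := by
    linear_combination (a1*b1*c1 + d1*e1*f1) * h000 + h111
      + (a1*b1*c0 + d1*e1*f0) * h001 + h110
      - (a0*b1*c1 + d0*e1*f1) * h100 - h011
      - (a0*b1*c0 + d0*e1*f0) * h101
  have hmne : m ≠ 0 := by
    intro h; rw [h, mul_zero] at hm0; simp at hm0
  have hc0 : c0 ≠ 0 := by
    intro h; rw [h] at hm0; simp at hm0
  have hf0 : f0 ≠ 0 := by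
    intro h; rw [h] at hm0; simp at hm0
  have hcf : c1 = 0 ∨ f1 = 0 := by
    rcases mul_eq_zero.mp hm2 with h | h
    · exact mul_eq_zero.mp h
    · exact absurd h hmne
  have hsum : c0*f1 + c1*f0 = 0 := by
    rcases mul_eq_zero.mp hm1 with h | h
    · exact h
    · exact absurd h hmne
  rcases hcf with hc1 | hf1
  · have hf1 : f1 = 0 := by
      rw [hc1, zero_mul, add_zero] at hsum
      exact (mul_eq_zero.mp hsum).resolve_left hc0
    rw [hc1, hf1] at h001
    simp at h001
  · have hc1 : c1 = 0 := by
      rw [hf1, mul_zero, zero_add] at hsum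
      exact (mul_eq_zero.mp hsum).resolve_right hf0
    rw [hc1, hf1] at h001
    simp at h001

/-- Contraction of a triple tensor by three functionals. -/
noncomputable def contr3 {F : Type*} [Field F] {V₁ V₂ V₃ : Type*}
    [AddCommGroup V₁] [Module F V₁] [AddCommGroup V₂] [Module F V₂]
    [AddCommGroup V₃] [Module F V₃]
    (p : V₁ →ₗ[F] F) (q : V₂ →ₗ[F] F) (r : V₃ →ₗ[F] F) :
    V₁ ⊗[F] (V₂ ⊗[F] V₃) →ₗ[F] F :=
  (TensorProduct.lid F F).toLinearMap ∘ₗ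
    TensorProduct.map p ((TensorProduct.lid F F).toLinearMap ∘ₗ TensorProduct.map q r)

@[simp] lemma contr3_tmul {F : Type*} [Field F] {V₁ V₂ V₃ : Type*}
    [AddCommGroup V₁] [Module F V₁] [AddCommGroup V₂] [Module F V₂]
    [AddCommGroup V₃] [Module F V₃]
    (p : V₁ →ₗ[F] F) (q : V₂ →ₗ[F] F) (r : V₃ →ₗ[F] F)
    (a : V₁) (b : V₂) (c : V₃) :
    contr3 p q r (a ⊗ₜ[F] (b ⊗ₜ[F] c)) = p a * (q b * r c) := by
  simp [contr3, TensorProduct.lid_tmul, smul_eq_mul, mul_comm]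

theorem stmt_0 (F : Type*) [Field F] [CharZero F] [IsAlgClosed F]
    (V₁ V₂ V₃ : Type*)
    [AddCommGroup V₁] [Module F V₁] [AddCommGroup V₂] [Module F V₂]
    [AddCommGroup V₃] [Module F V₃]
    (x₁ y₁ : V₁) (x₂ y₂ : V₂) (x₃ y₃ : V₃)
    (h₁ : LinearIndependent F ![x₁, y₁])
    (h₂ : LinearIndependent F ![x₂, y₂])
    (h₃ : LinearIndependent F ![x₃, y₃]) :
    ∀ (v₁ w₁ : V₁) (v₂ w₂ : V₂) (v₃ w₃ : V₃),
      x₁ ⊗ₜ[F] (x₂ ⊗ₜ[F] x₃) + y₁ ⊗ₜ[F] (x₂ ⊗ₜ[F] x₃)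
        + x₁ ⊗ₜ[F] (y₂ ⊗ₜ[F] x₃) + x₁ ⊗ₜ[F] (x₂ ⊗ₜ[F] y₃)
        ≠ v₁ ⊗ₜ[F] (v₂ ⊗ₜ[F] v₃) + w₁ ⊗ₜ[F] (w₂ ⊗ₜ[F] w₃) := by
  intro v₁ w₁ v₂ w₂ v₃ w₃ heq
  obtain ⟨f₁, g₁, hf₁x, hf₁y, hg₁x, hg₁y⟩ := exists_dual_pair F h₁
  obtain ⟨f₂, g₂, hf₂x, hf₂y, hg₂x, hg₂y⟩ := exists_dual_pair F h₂
  obtain ⟨f₃, g₃, hf₃x, hf₃y, hg₃x, hg₃y⟩ := exists_dual_pair F h₃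
  have ev : ∀ (p : V₁ →ₗ[F] F) (q : V₂ →ₗ[F] F) (r : V₃ →ₗ[F] F),
      p x₁ * (q x₂ * r x₃) + p y₁ * (q x₂ * r x₃)
        + p x₁ * (q y₂ * r x₃) + p x₁ * (q x₂ * r y₃)
        = p v₁ * (q v₂ * r v₃) + p w₁ * (q w₂ * r w₃) := by
    intro p q r
    have := congrArg (contr3 p q r) heq
    simpa using this
  have e000 := ev f₁ f₂ f₃
  have e100 := ev g₁ f₂ f₃
  have e010 := ev f₁ g₂ f₃
  have e001 := ev f₁ f₂ g₃
  have e110 := ev g₁ g₂ f₃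
  have e101 := ev g₁ f₂ g₃
  have e011 := ev f₁ g₂ g₃
  have e111 := ev g₁ g₂ g₃
  rw [hf₁x, hf₁y, hf₂x, hf₂y, hf₃x, hf₃y] at e000
  rw [hg₁x, hg₁y, hf₂x, hf₂y, hf₃x, hf₃y] at e100
  rw [hf₁x, hf₁y, hg₂x, hg₂y, hf₃x, hf₃y] at e010
  rw [hf₁x, hf₁y, hf₂x, hf₂y, hg₃x, hg₃y] at e001
  rw [hg₁x, hg₁y, hg₂x, hg₂y, hf₃x, hf₃y] at e110
  rw [hg₁x, hg₁y, hf₂x, hf₂y, hg₃x, hg₃y] at e101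
  rw [hf₁x, hf₁y, hg₂x, hg₂y, hg₃x, hg₃y] at e011
  rw [hg₁x, hg₁y, hg₂x, hg₂y, hg₃x, hg₃y] at e111
  ring_nf at e000 e100 e010 e001 e110 e101 e011 e111
  exact key_scalar (f₁ v₁) (g₁ v₁) (f₂ v₂) (g₂ v₂) (f₃ v₃) (g₃ v₃)
    (f₁ w₁) (g₁ w₁) (f₂ w₂) (g₂ w₂) (f₃ w₃) (g₃ w₃)
    (by linear_combination -e000) (by linear_combination -e100)
    (by linear_combination -e010) (by linear_combination -e001)
    (by linear_combination -e110) (by linear_combination -e101)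
    (by linear_combination -e011) (by linear_combination -e111)
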